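/- With ℓ(λ) and m(λ) as below, the Lyapunov Hamiltonian flow satisfies the vector Lax equation {H₁, ℓ(λ)}₁ = m(λ) × ℓ(λ) componentwise, as an identity of functions of (p,M) for each value of λ. -/
import Mathlib


open scoped BigOperators

abbrev V3 := Fin 3 → ℝ
abbrev Ph := V3 × V3

noncomputable def eps (i j k : Fin 3) : ℝ :=
  (((j : ℤ) - (i : ℤ)) * ((k : ℤ) - (j : ℤ)) * ((k : ℤ) - (i : ℤ)) : ℤ) / 2

def dot (u v : V3) : ℝ := ∑ i, u i * v i

def cross (u v : V3) : V3 :=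
  ![u 1 * v 2 - u 2 * v 1, u 2 * v 0 - u 0 * v 2, u 0 * v 1 - u 1 * v 0]

/-- derivative in the direction of the i-th coordinate of the first factor -/
noncomputable def Dp (i : Fin 3) (F : Ph → ℝ) (z : Ph) : ℝ :=
  fderiv ℝ F z (Pi.single i 1, 0)

/-- derivative in the direction of the i-th coordinate of the second factor -/
noncomputable def DM (i : Fin 3) (F : Ph → ℝ) (z : Ph) : ℝ :=
  fderiv ℝ F z (0, Pi.single i 1)

/-- e(3) Lie–Poisson bracket on functions of z = (p, M):
{M_i,M_j} = ε_{ijk} M_k, {M_i,p_j} = ε_{ijk} p_k, {p_i,p_j} = 0. -/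
noncomputable def pb1 (F G : Ph → ℝ) (z : Ph) : ℝ :=
  ∑ i, ∑ j, ∑ k, eps i j k *
    ( z.2 k * DM i F z * DM j G z
    + z.1 k * (DM i F z * Dp j G z + Dp i F z * DM j G z) )
noncomputable def HL (a : Fin 3 → ℝ) (z : Ph) : ℝ :=
  ( dot z.2 z.2 - 2 * dot z.2 (fun i => a i * z.1 i)
  + dot z.1 (fun i => (a (i+1) - a (i+2))^2 * z.1 i) ) / 4

/-- H₁ = H_L − (⟨p,M⟩/2)tr A + |p|² tr A^∨. -/
noncomputable def H1 (a : Fin 3 → ℝ) (z : Ph) : ℝ :=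
  HL a z - (dot z.1 z.2 / 2) * (a 0 + a 1 + a 2)
    + dot z.1 z.1 * (a 1 * a 2 + a 2 * a 0 + a 0 * a 1)

/-- K\u00f6tter vector ℓ(λ) = W(½(M − Bp) + λp), W = diag(w₁,w₂,w₃),
B = diag(a₂+a₃,a₃+a₁,a₁+a₂). -/
noncomputable def lvec (a w : Fin 3 → ℝ) (lam : ℝ) (z : Ph) : V3 := fun i =>
  w i * ((1/2) * (z.2 i - (a (i+1) + a (i+2)) * z.1 i) + lam * z.1 i)

/-- m(λ) = W^∨ p, W^∨ = diag(w₂w₃, w₃w₁, w₁w₂). -/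
noncomputable def mvec (w : Fin 3 → ℝ) (z : Ph) : V3 := fun i =>
  w (i+1) * w (i+2) * z.1 i

noncomputable def cpAux (j : Fin 3) : Ph →L[ℝ] ℝ :=
  (ContinuousLinearMap.proj j).comp (ContinuousLinearMap.fst ℝ V3 V3)
noncomputable def cmAux (j : Fin 3) : Ph →L[ℝ] ℝ :=
  (ContinuousLinearMap.proj j).comp (ContinuousLinearMap.snd ℝ V3 V3)

lemma hcpAux (j : Fin 3) (z : Ph) : HasFDerivAt (fun z : Ph => z.1 j) (cpAux j) z :=
  (cpAux j).hasFDerivAt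
lemma hcmAux (j : Fin 3) (z : Ph) : HasFDerivAt (fun z : Ph => z.2 j) (cmAux j) z :=
  (cmAux j).hasFDerivAt

lemma hlvecAux (a w : Fin 3 → ℝ) (lam : ℝ) (z : Ph) (i : Fin 3) :
    HasFDerivAt (fun z : Ph => lvec a w lam z i)
      ((w i) • ((1/2 : ℝ) • (cmAux i - (a (i+1) + a (i+2)) • cpAux i) + lam • cpAux i)) z := by
  have h := ((((hcmAux i z).sub ((hcpAux i z).const_mul (a (i+1) + a (i+2)))).const_mul
      ((1:ℝ)/2)).add ((hcpAux i z).const_mul lam)).const_mul (w i)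
  exact h.congr_of_eventuallyEq (Filter.Eventually.of_forall fun y => by simp [lvec])

lemma hH1Aux (a : Fin 3 → ℝ) (z : Ph) :
    HasFDerivAt (H1 a)
      (∑ i : Fin 3,
        (((1:ℝ)/4) • (z.2 i • cmAux i + z.2 i • cmAux i)
         + (-(a i)/2 - (a 0 + a 1 + a 2)/2) • (z.1 i • cmAux i + z.2 i • cpAux i)
         + ((a (i+1) - a (i+2))^2/4 + (a 1*a 2 + a 2*a 0 + a 0*a 1)) • (z.1 i • cpAux i + z.1 i • cpAux i))) z := by
  have h := HasFDerivAt.sum (u := (Finset.univ : Finset (Fin 3)))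
    (fun i _ => ((((hcmAux i z).mul (hcmAux i z)).const_mul ((1:ℝ)/4)).add
      (((hcpAux i z).mul (hcmAux i z)).const_mul (-(a i)/2 - (a 0 + a 1 + a 2)/2))).add
      (((hcpAux i z).mul (hcpAux i z)).const_mul ((a (i+1) - a (i+2))^2/4 + (a 1*a 2 + a 2*a 0 + a 0*a 1))))
  exact h.congr_of_eventuallyEq (Filter.Eventually.of_forall fun y => by
    simp [H1, HL, dot, Fin.sum_univ_three]; ring)

lemma DM_H1Aux (a : Fin 3 → ℝ) (z : Ph) (k : Fin 3) :
    DM k (H1 a) z = z.2 k / 2 + (-(a k)/2 - (a 0 + a 1 + a 2)/2) * z.1 k := by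
  rw [DM, (hH1Aux a z).fderiv]
  fin_cases k <;>
    simp [cpAux, cmAux, Pi.single_apply, Fin.sum_univ_three, Fin.ext_iff] <;> ring

lemma Dp_H1Aux (a : Fin 3 → ℝ) (z : Ph) (k : Fin 3) :
    Dp k (H1 a) z = (-(a k)/2 - (a 0 + a 1 + a 2)/2) * z.2 k
      + 2 * ((a (k+1) - a (k+2))^2/4 + (a 1*a 2 + a 2*a 0 + a 0*a 1)) * z.1 k := by
  rw [Dp, (hH1Aux a z).fderiv]
  fin_cases k <;>
    simp [cpAux, cmAux, Pi.single_apply, Fin.sum_univ_three, Fin.ext_iff] <;> ring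

lemma DM_lAux (a w : Fin 3 → ℝ) (lam : ℝ) (z : Ph) (i k : Fin 3) :
    DM k (fun z => lvec a w lam z i) z = if i = k then w i / 2 else 0 := by
  rw [DM, (hlvecAux a w lam z i).fderiv]
  by_cases h : i = k <;> simp [cpAux, cmAux, Pi.single_apply, h] <;> ring

lemma Dp_lAux (a w : Fin 3 → ℝ) (lam : ℝ) (z : Ph) (i k : Fin 3) :
    Dp k (fun z => lvec a w lam z i) z
      = if i = k then w i * (lam - (a (i+1) + a (i+2))/2) else 0 := by
  rw [Dp, (hlvecAux a w lam z i).fderiv]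
  by_cases h : i = k <;> simp [cpAux, cmAux, Pi.single_apply, h] <;> ring

/-- The vector Lax equation {H₁, ℓ(λ)}₁ = m(λ) × ℓ(λ), componentwise, as an
identity in the symbols wᵢ subject to wᵢ² = λ − aᵢ. -/
theorem vector_lax_equation (a w : Fin 3 → ℝ) (lam : ℝ)
    (hw : ∀ i, w i ^ 2 = lam - a i) (z : Ph) (i : Fin 3) :
    pb1 (H1 a) (fun z => lvec a w lam z i) z
      = cross (mvec w z) (lvec a w lam z) i := by
  fin_cases i
  · simp only [pb1, Fin.sum_univ_three, DM_H1Aux, Dp_H1Aux, DM_lAux, Dp_lAux]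
    simp [eps, cross, mvec, lvec, Fin.ext_iff]
    linear_combination
      (-(w 0 * z.1 1 * ((1/2) * (z.2 2 - (a 0 + a 1) * z.1 2) + lam * z.1 2))) * hw 2
      + (w 0 * z.1 2 * ((1/2) * (z.2 1 - (a 2 + a 0) * z.1 1) + lam * z.1 1)) * hw 1
  · simp only [pb1, Fin.sum_univ_three, DM_H1Aux, Dp_H1Aux, DM_lAux, Dp_lAux]
    simp [eps, cross, mvec, lvec, Fin.ext_iff]
    linear_combination
      (-(w 1 * z.1 2 * ((1/2) * (z.2 0 - (a 1 + a 2) * z.1 0) + lam * z.1 0))) * hw 0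
      + (w 1 * z.1 0 * ((1/2) * (z.2 2 - (a 0 + a 1) * z.1 2) + lam * z.1 2)) * hw 2
  · simp only [pb1, Fin.sum_univ_three, DM_H1Aux, Dp_H1Aux, DM_lAux, Dp_lAux]
    simp [eps, cross, mvec, lvec, Fin.ext_iff]
    linear_combination
      (-(w 2 * z.1 0 * ((1/2) * (z.2 1 - (a 2 + a 0) * z.1 1) + lam * z.1 1))) * hw 1
      + (w 2 * z.1 1 * ((1/2) * (z.2 0 - (a 1 + a 2) * z.1 0) + lam * z.1 0)) * hw 0
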